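/- Let $k$ be a field of characteristic $\neq 2$, $n \geq 1$, $G = (\mathbb{Z}/2)^n$, and let $M$ be a $k[G]$-module. Let $\epsilon_1, \ldots, \epsilon_N$ ($N = 2^n - 1$) be the idempotents $\epsilon_S = 2^{-(n-1)}\sum_{h\in H_S} h$ indexed by the nonempty subsets $S$, and suppose $\epsilon_G \cdot x = 0$ for all $x \in M$, where $\epsilon_G = 2^{-n}\sum_{g\in G} g$. Then the map $\gamma: \bigoplus_{S} \epsilon_S M \to M$, $\gamma(x_1,\ldots,x_N) = \sum_i x_i$, is an isomorphism of $k$-vector spaces, with inverse $\psi(y) = (\epsilon_1 y, \ldots, \epsilon_N y)$. -/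

import Mathlib

open scoped BigOperators

/-- The idempotent `ε_S = 2^{-(n-1)} ∑_{h ∈ H_S} h` in the group ring `k[(ℤ/2)ⁿ]`. -/
noncomputable def epsS (k : Type*) [Field k] (n : ℕ) (S : Finset (Fin n)) :
    AddMonoidAlgebra k (Fin n → ZMod 2) :=
  (2 ^ (n - 1) : k)⁻¹ •
    ∑ h ∈ Finset.univ.filter (fun a : Fin n → ZMod 2 => ∑ i ∈ S, a i = 0),
      AddMonoidAlgebra.single h (1 : k)

/-- The idempotent `ε_G = 2^{-n} ∑_{g ∈ G} g` in the group ring `k[(ℤ/2)ⁿ]`. -/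
noncomputable def epsG (k : Type*) [Field k] (n : ℕ) :
    AddMonoidAlgebra k (Fin n → ZMod 2) :=
  (2 ^ n : k)⁻¹ • ∑ g : Fin n → ZMod 2, AddMonoidAlgebra.single g (1 : k)

section Aux
open Finset

lemma fiber_card_eq {A B : Type*} [AddCommGroup A] [Fintype A] [DecidableEq B] [AddCommGroup B]
    (f : A →+ B) (hf : Function.Surjective f) (b b' : B) :
    (univ.filter fun a => f a = b).card = (univ.filter fun a => f a = b').card := by
  obtain ⟨d, hd⟩ := hf (b' - b)
  apply Finset.card_bij (fun a _ => a + d)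
  · intro a ha
    simp only [mem_filter, mem_univ, true_and] at ha ⊢
    rw [map_add, ha, hd]; abel
  · intro a ha a' ha' h; exact add_right_cancel h
  · intro c hc
    refine ⟨c - d, ?_, by abel⟩
    simp only [mem_filter, mem_univ, true_and] at hc ⊢
    rw [map_sub, hc, hd]; abel

lemma fiber_card_mul {A B : Type*} [AddCommGroup A] [Fintype A] [DecidableEq B] [AddCommGroup B]
    [Fintype B] (f : A →+ B) (hf : Function.Surjective f) (b : B) :
    (univ.filter fun a => f a = b).card * Fintype.card B = Fintype.card A := by
  have h1 : (Fintype.card A) = ∑ b' : B, (univ.filter fun a => f a = b').card :=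
    Finset.card_eq_sum_card_fiberwise (fun a _ => mem_univ (f a))
  rw [h1, Finset.sum_congr rfl (fun b' _ => fiber_card_eq f hf b' b), Finset.sum_const,
    smul_eq_mul, Fintype.card, mul_comm]

def chiHom (n : ℕ) (S : Finset (Fin n)) : (Fin n → ZMod 2) →+ ZMod 2 where
  toFun := fun a => ∑ i ∈ S, a i
  map_zero' := by simp
  map_add' := by intro a b; simp [Finset.sum_add_distrib]

lemma chiHom_single (n : ℕ) (S : Finset (Fin n)) (j : Fin n) :
    chiHom n S (Pi.single j 1) = if j ∈ S then 1 else 0 := by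
  show (∑ i ∈ S, Pi.single j (1 : ZMod 2) i) = _
  simp only [Pi.single_apply]
  exact Finset.sum_ite_eq' S j (fun _ => 1)

@[simp] lemma chiHom_apply (n : ℕ) (S : Finset (Fin n)) (a : Fin n → ZMod 2) :
    chiHom n S a = ∑ i ∈ S, a i := rfl

lemma zmod2_cases : ∀ x : ZMod 2, x = 0 ∨ x = 1 := by decide

lemma surj_aux {n : ℕ} {S T : Finset (Fin n)} (hT : T.Nonempty) {i : Fin n}
    (hiS : i ∈ S) (hiT : i ∉ T) :
    Function.Surjective ((chiHom n S).prod (chiHom n T)) := by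
  obtain ⟨j, hj⟩ := hT
  set Φ := (chiHom n S).prod (chiHom n T)
  have hu : Φ (Pi.single i 1) = (1, 0) := by
    simp [Φ, AddMonoidHom.prod_apply, chiHom_single, hiS, hiT]
  have hv : ∃ v, Φ v = (0, 1) := by
    by_cases hjS : j ∈ S
    · refine ⟨Pi.single j 1 + Pi.single i 1, ?_⟩
      rw [map_add, hu]
      simp [Φ, AddMonoidHom.prod_apply, chiHom_single, hjS, hj, Prod.ext_iff]
      decide
    · exact ⟨Pi.single j 1, by simp [Φ, AddMonoidHom.prod_apply, chiHom_single, hjS, hj]⟩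
  obtain ⟨v, hv⟩ := hv
  rintro ⟨a, b⟩
  rcases zmod2_cases a with ha | ha <;> rcases zmod2_cases b with hb | hb <;> subst ha hb
  · exact ⟨0, by simp; rfl⟩
  · exact ⟨v, hv⟩
  · exact ⟨Pi.single i 1, hu⟩
  · exact ⟨Pi.single i 1 + v, by rw [map_add, hu, hv]; decide⟩

lemma surj_pair {n : ℕ} {S T : Finset (Fin n)} (hS : S.Nonempty) (hT : T.Nonempty)
    (hST : S ≠ T) : Function.Surjective ((chiHom n S).prod (chiHom n T)) := by
  have : ∃ i, (i ∈ S ∧ i ∉ T) ∨ (i ∈ T ∧ i ∉ S) := by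
    by_contra h
    push_neg at h
    exact hST (Finset.ext fun i => ⟨(h i).1, (h i).2⟩)
  obtain ⟨i, ⟨h1, h2⟩ | ⟨h1, h2⟩⟩ := this
  · exact surj_aux hT h1 h2
  · have hs := surj_aux hS h1 h2
    intro y
    obtain ⟨x, hx⟩ := hs y.swap
    refine ⟨x, ?_⟩
    have : ((chiHom n T).prod (chiHom n S)) x = ((chiHom n S).prod (chiHom n T) x).swap := rfl
    rw [this] at hx
    simpa using congrArg Prod.swap hx

lemma count_pair {n : ℕ} {S T : Finset (Fin n)} (hS : S.Nonempty) (hT : T.Nonempty)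
    (hST : S ≠ T) (c : ZMod 2 × ZMod 2) :
    (univ.filter fun a : Fin n → ZMod 2 =>
      ((chiHom n S).prod (chiHom n T)) a = c).card * 4 = 2 ^ n := by
  have := fiber_card_mul _ (surj_pair hS hT hST) c
  simpa using this

lemma epsS_mul_epsS (k : Type*) [Field k] (h2 : (2 : k) ≠ 0) {n : ℕ} (hn : 1 ≤ n)
    {S T : Finset (Fin n)} (hS : S.Nonempty) (hT : T.Nonempty) (hST : S ≠ T) :
    epsS k n S * epsS k n T = epsG k n := by
  classical
  have addself : ∀ a : Fin n → ZMod 2, a + a = 0 := by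
    have h : ∀ x : ZMod 2, x + x = 0 := by decide
    intro a; funext i; exact h (a i)
  rw [epsS, epsS, epsG, smul_mul_smul_comm, Finset.sum_mul_sum]
  simp only [AddMonoidAlgebra.single_mul_single, one_mul]
  rw [← Finset.sum_product']
  rw [← Finset.sum_fiberwise_of_maps_to (g := fun p => p.1 + p.2) (t := univ)
    (fun p _ => mem_univ _)]
  set A := univ.filter (fun a : Fin n → ZMod 2 => ∑ i ∈ S, a i = 0) with hA
  set B := univ.filter (fun a : Fin n → ZMod 2 => ∑ i ∈ T, a i = 0) with hB
  have hcard : ∀ g : Fin n → ZMod 2,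
      ((A ×ˢ B).filter (fun p => p.1 + p.2 = g)).card * 4 = 2 ^ n := by
    intro g
    rw [show ((A ×ˢ B).filter (fun p => p.1 + p.2 = g)).card
        = (univ.filter fun a : Fin n → ZMod 2 =>
            ((chiHom n S).prod (chiHom n T)) a = (0, ∑ i ∈ T, g i)).card from ?_]
    · exact count_pair hS hT hST _
    · apply Finset.card_bij (fun p _ => p.1)
      · rintro ⟨a, b⟩ hp
        simp only [Finset.mem_filter, Finset.mem_product, Finset.mem_univ, true_and, hA, hB,
          AddMonoidHom.prod_apply, chiHom_apply, Prod.mk.injEq] at hp ⊢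
        obtain ⟨⟨ha, hb⟩, hab⟩ := hp
        refine ⟨ha, ?_⟩
        have : ∑ i ∈ T, g i = ∑ i ∈ T, a i + ∑ i ∈ T, b i := by
          rw [← hab]; simp [Finset.sum_add_distrib]
        rw [this, hb, add_zero]
      · rintro ⟨a, b⟩ hp ⟨a', b'⟩ hp' (h : a = a')
        simp only [Finset.mem_filter] at hp hp'
        have : a + b = a' + b' := hp.2.trans hp'.2.symm
        rw [h] at this
        exact Prod.ext h (add_left_cancel this)
      · intro a ha
        simp only [Finset.mem_filter, Finset.mem_univ, true_and, AddMonoidHom.prod_apply,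
          chiHom_apply, Prod.mk.injEq] at ha
        refine ⟨(a, a + g), ?_, rfl⟩
        simp only [Finset.mem_filter, Finset.mem_product, Finset.mem_univ, true_and, hA, hB]
        refine ⟨⟨ha.1, ?_⟩, ?_⟩
        · have : ∑ i ∈ T, (a + g) i = ∑ i ∈ T, a i + ∑ i ∈ T, g i := by
            simp [Pi.add_apply, Finset.sum_add_distrib]
          rw [this, ha.2, ← Finset.sum_add_distrib]
          have h0 : ∀ x : ZMod 2, x + x = 0 := by decide
          simp [h0]
        · show a + (a + g) = g
          rw [← add_assoc, addself a, zero_add]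
  set m := ((A ×ˢ B).filter (fun p : (Fin n → ZMod 2) × (Fin n → ZMod 2) =>
      p.1 + p.2 = (0 : Fin n → ZMod 2))).card with hm
  have hconst : ∀ g ∈ (univ : Finset (Fin n → ZMod 2)),
      ∑ p ∈ (A ×ˢ B).filter (fun p => p.1 + p.2 = g),
        AddMonoidAlgebra.single (R := k) (p.1 + p.2) 1 = m • AddMonoidAlgebra.single g 1 := by
    intro g _
    rw [Finset.sum_congr rfl (fun p hp => by
      rw [(Finset.mem_filter.mp hp).2]), Finset.sum_const]
    congr 1
    have h4 : (4 : ℕ) ≠ 0 := by norm_num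
    have := (hcard g).trans (hcard 0).symm
    exact Nat.eq_of_mul_eq_mul_right (by norm_num) this
  rw [Finset.sum_congr rfl hconst, ← Finset.smul_sum, ← Nat.cast_smul_eq_nsmul k, smul_smul]
  congr 1
  have hmk : (m : k) * 4 = 2 ^ n := by
    have := hcard 0
    rw [hm]
    exact_mod_cast congrArg (Nat.cast (R := k)) this
  have hne : (2 : k) ^ (n - 1) ≠ 0 := pow_ne_zero _ h2
  have hne' : (2 : k) ^ n ≠ 0 := pow_ne_zero _ h2
  have h4 : (4 : k) ≠ 0 := by
    intro h; apply h2; have : (2:k)*2 = 0 := by rw [← h]; norm_num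
    rcases mul_eq_zero.mp this with h | h <;> exact h
  field_simp
  apply mul_left_cancel₀ h4
  calc (4:k) * (↑m * 2 ^ n) = ((m:k) * 4) * 2 ^ n := by ring
    _ = 2 ^ n * 2 ^ n := by rw [hmk]
    _ = 4 * (2 ^ (n-1) * 2 ^ (n-1)) := by
        rw [← pow_add, show n + n = 2 + ((n-1) + (n-1)) by omega, pow_add, pow_add]
        norm_num
    _ = 4 * (2 ^ (n - 1)) ^ 2 := by ring

lemma count_subsets {n : ℕ} {h : Fin n → ZMod 2} (hh : h ≠ 0) :
    (univ.filter fun S : Finset (Fin n) => ∑ i ∈ S, h i = 0).card * 2 = 2 ^ n := by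
  classical
  obtain ⟨i₀, hi₀⟩ : ∃ i, h i = 1 := by
    by_contra hc
    push_neg at hc
    apply hh
    funext i
    have : ∀ x : ZMod 2, x ≠ 1 → x = 0 := by decide
    exact this _ (hc i)
  set t : Finset (Fin n) → Finset (Fin n) :=
    fun S => if i₀ ∈ S then S.erase i₀ else insert i₀ S with ht
  have hsum : ∀ S, ∑ i ∈ t S, h i = ∑ i ∈ S, h i + 1 := by
    intro S
    by_cases hi : i₀ ∈ S
    · simp only [ht, if_pos hi]
      have key := Finset.sum_erase_add S h hi
      rw [hi₀] at key
      have h11 : ∀ a b : ZMod 2, a + 1 = b → a = b + 1 := by decide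
      exact h11 _ _ key
    · simp only [ht, if_neg hi, Finset.sum_insert hi, hi₀, add_comm]
  have hinv : ∀ S, t (t S) = S := by
    intro S
    by_cases hi : i₀ ∈ S
    · have h1 : i₀ ∉ S.erase i₀ := Finset.notMem_erase _ _
      simp only [ht, if_pos hi, if_neg h1, Finset.insert_erase hi]
    · simp only [ht, if_neg hi, Finset.mem_insert, true_or, if_pos, Finset.erase_insert hi]
  have hcards : (univ.filter fun S : Finset (Fin n) => ∑ i ∈ S, h i = 0).card
      = (univ.filter fun S : Finset (Fin n) => ¬ (∑ i ∈ S, h i = 0)).card := by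
    apply Finset.card_bij' (fun S _ => t S) (fun S _ => t S)
    · intro S hS
      simp only [mem_filter, mem_univ, true_and] at hS ⊢
      rw [hsum, hS]
      decide
    · intro S hS
      simp only [mem_filter, mem_univ, true_and] at hS ⊢
      rw [hsum]
      revert hS
      generalize ∑ i ∈ S, h i = w
      revert w; decide
    · intro S _; exact hinv S
    · intro S _; exact hinv S
  have := Finset.card_filter_add_card_filter_not
    (s := (univ : Finset (Finset (Fin n)))) (p := fun S => ∑ i ∈ S, h i = 0)
  rw [← hcards] at this
  rw [Nat.mul_two]
  rw [this, Finset.card_univ, Fintype.card_finset, Fintype.card_fin]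

lemma sum_epsS (k : Type*) [Field k] (h2 : (2:k) ≠ 0) {n : ℕ} (hn : 1 ≤ n) :
    ∑ S : {S : Finset (Fin n) // S.Nonempty}, epsS k n S.1
      = 1 + ((2:k)^n - 2) • epsG k n := by
  classical
  have step1 := @Finset.sum_subtype (Finset (Fin n)) _ _ (fun S => S.Nonempty) inferInstance
      ((univ : Finset (Finset (Fin n))).erase ∅)
      (fun S => by simp [Finset.nonempty_iff_ne_empty]) (epsS k n)
  have step2 : ∑ S ∈ (univ : Finset (Finset (Fin n))).erase ∅, epsS k n S
      = (∑ S : Finset (Fin n), epsS k n S) - epsS k n ∅ := by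
    rw [eq_sub_iff_add_eq, Finset.sum_erase_add _ _ (mem_univ ∅)]
  set X := ∑ g : Fin n → ZMod 2, AddMonoidAlgebra.single g (1:k) with hX
  have pow_split : (2:ℕ)^n = 2^(n-1) + 2^(n-1) := by
    rw [← Nat.two_mul, ← pow_succ']
    congr 1; omega
  have htot : ∑ S : Finset (Fin n), epsS k n S = X + 1 := by
    unfold epsS
    rw [← Finset.smul_sum]
    have swap : ∑ S : Finset (Fin n),
        ∑ h ∈ univ.filter (fun a : Fin n → ZMod 2 => ∑ i ∈ S, a i = 0),
          AddMonoidAlgebra.single h (1:k)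
        = ∑ h : Fin n → ZMod 2,
            (univ.filter (fun S : Finset (Fin n) => ∑ i ∈ S, h i = 0)).card •
              AddMonoidAlgebra.single h (1:k) := by
      simp_rw [Finset.sum_filter]
      rw [Finset.sum_comm]
      refine Finset.sum_congr rfl (fun h _ => ?_)
      rw [← Finset.sum_filter, Finset.sum_const]
    rw [swap]
    have hcount : ∀ h : Fin n → ZMod 2,
        (univ.filter (fun S : Finset (Fin n) => ∑ i ∈ S, h i = 0)).card •
            AddMonoidAlgebra.single h (1:k)
        = 2^(n-1) • AddMonoidAlgebra.single h (1:k) +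
            (if h = 0 then (2^(n-1) : ℕ) • AddMonoidAlgebra.single (0 : Fin n → ZMod 2) (1:k)
             else 0) := by
      intro h
      by_cases hh : h = 0
      · subst hh
        rw [if_pos rfl]
        have heq : (univ.filter (fun S : Finset (Fin n) =>
            ∑ i ∈ S, (0 : Fin n → ZMod 2) i = 0)) = univ :=
          Finset.filter_true_of_mem (fun S _ => by simp)
        rw [heq, Finset.card_univ, Fintype.card_finset, Fintype.card_fin, pow_split, add_smul]
      · rw [if_neg hh, add_zero]
        congr 1
        have h1 := count_subsets hh
        omega
    rw [Finset.sum_congr rfl (fun h _ => hcount h), Finset.sum_add_distrib,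
      Finset.sum_ite_eq' univ (0 : Fin n → ZMod 2), if_pos (mem_univ _), ← Finset.smul_sum,
      ← AddMonoidAlgebra.one_def, smul_add, ← Nat.cast_smul_eq_nsmul k,
      ← Nat.cast_smul_eq_nsmul k, smul_smul, smul_smul]
    push_cast
    rw [inv_mul_cancel₀ (pow_ne_zero _ h2), one_smul, one_smul]
  have hempty : epsS k n ∅ = ((2:k)^(n-1))⁻¹ • X := by
    unfold epsS
    congr 1
    rw [show univ.filter (fun a : Fin n → ZMod 2 => ∑ i ∈ (∅ : Finset (Fin n)), a i = 0) = univ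
      from Finset.filter_true_of_mem (fun a _ => by simp)]
  rw [← step1, step2, htot, hempty]
  unfold epsG
  rw [smul_smul]
  have hrw : X + 1 - ((2:k)^(n-1))⁻¹ • X = 1 + ((1:k) - ((2:k)^(n-1))⁻¹) • X := by
    rw [sub_smul, one_smul]; abel
  rw [hrw]
  congr 2
  have hne : (2:k)^(n-1) ≠ 0 := pow_ne_zero _ h2
  have hne' : (2:k)^n ≠ 0 := pow_ne_zero _ h2
  obtain ⟨p, rfl⟩ : ∃ p, n = p + 1 := ⟨n - 1, by omega⟩
  simp only [Nat.add_sub_cancel]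
  field_simp
  ring

end Aux

/-- if `ε_G` annihilates the `k[G]`-module `M`, then
`γ : ⊕_S ε_S M → M`, `γ(x₁,…,x_N) = ∑ xᵢ`, is bijective with inverse
`ψ(y) = (ε₁ y, …, ε_N y)`.  Equivalently: `∑_S ε_S • y = y` for all `y`, and for any
tuple `(x_S)` with `x_S ∈ ε_S M` (i.e. `ε_S • x_S = x_S`), applying `ε_S` to the sum
recovers `x_S`. -/
theorem gamma_isomorphism (k : Type*) [Field k] (h2 : (2 : k) ≠ 0)
    (n : ℕ) (hn : 1 ≤ n)
    (M : Type*) [AddCommGroup M] [Module (AddMonoidAlgebra k (Fin n → ZMod 2)) M]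
    (hG : ∀ x : M, epsG k n • x = 0) :
    (∀ y : M, ∑ S : {S : Finset (Fin n) // S.Nonempty}, epsS k n S.1 • y = y) ∧
    (∀ x : {S : Finset (Fin n) // S.Nonempty} → M,
      (∀ S, epsS k n S.1 • x S = x S) →
      ∀ S, epsS k n S.1 • (∑ T : {S : Finset (Fin n) // S.Nonempty}, x T) = x S) := by
  constructor
  · intro y
    rw [← Finset.sum_smul, sum_epsS k h2 hn, add_smul, one_smul, Algebra.smul_def, mul_smul,
      hG, smul_zero, add_zero]
  · intro x hx S
    rw [Finset.smul_sum, Finset.sum_eq_single S]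
    · exact hx S
    · intro T _ hTS
      have hne : S.1 ≠ T.1 := fun h => hTS (Subtype.ext h.symm)
      calc epsS k n S.1 • x T = epsS k n S.1 • (epsS k n T.1 • x T) := by rw [hx T]
        _ = (epsS k n S.1 * epsS k n T.1) • x T := (mul_smul _ _ _).symm
        _ = epsG k n • x T := by rw [epsS_mul_epsS k h2 hn S.2 T.2 hne]
        _ = 0 := hG _
    · intro h
      exact absurd (Finset.mem_univ S) h
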